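/- Let F be a spanning linear forest of a graph G, let v be an endpoint of F (a vertex of degree at most 1 in F), and let u be a neighbour of v in G with u having degree at least 1 in F. Then there exists an edge uw of F such that the graph F' obtained from F by deleting uw and adding uv is again a linear forest, and F' has the same number of connected components as F. -/

import Mathlib

open SimpleGraph

def IsLinearForest {V : Type*} (F : SimpleGraph V) : Prop :=
  F.IsAcyclic ∧ ∀ v, (F.neighborSet v).ncard ≤ 2

instance myCCFinite {V : Type*} [Finite V] (G : SimpleGraph V) :
    Finite G.ConnectedComponent := Quot.finite _

private lemma walk_const {V : Type*} {G : SimpleGraph V} {β : Sort*} (f : V → β)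
    (h : ∀ v w, G.Adj v w → f v = f w) : ∀ {v w : V}, G.Walk v w → f v = f w := by
  intro v w p
  induction p with
  | nil => rfl
  | cons ha _ ih => exact (h _ _ ha).trans ih

/-- Deleting a bridge increases the number of connected components by one. -/
lemma card_cc_delete {V : Type*} [Finite V] {H : SimpleGraph V} {a b : V} (hab : H.Adj a b)
    (hbr : ¬(H \ fromEdgeSet {s(a, b)}).Reachable a b) :
    Nat.card (H \ fromEdgeSet {s(a, b)}).ConnectedComponent
      = Nat.card H.ConnectedComponent + 1 := by
  classical
  set D := H \ fromEdgeSet {s(a, b)} with hDdef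
  have hDle : D ≤ H := sdiff_le
  have hadjD : ∀ {x y : V}, D.Adj x y → H.Adj x y := fun h => ((sdiff_adj _ _ _ _).mp h).1
  -- forward map
  have hαc : ∀ v w, D.Adj v w →
      (if D.Reachable v b then (Sum.inr () : H.ConnectedComponent ⊕ Unit)
        else Sum.inl (H.connectedComponentMk v))
      = (if D.Reachable w b then (Sum.inr () : H.ConnectedComponent ⊕ Unit)
        else Sum.inl (H.connectedComponentMk w)) := by
    intro v w hvw
    by_cases hv : D.Reachable v b
    · have hw : D.Reachable w b := hvw.symm.reachable.trans hv
      simp [hv, hw]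
    · have hw : ¬D.Reachable w b := fun hw => hv (hvw.reachable.trans hw)
      simp only [hv, hw, if_neg, if_false]
      exact congrArg Sum.inl (ConnectedComponent.sound ((hadjD hvw).reachable))
  let α : D.ConnectedComponent → H.ConnectedComponent ⊕ Unit :=
    ConnectedComponent.lift
      (fun x => if D.Reachable x b then Sum.inr () else Sum.inl (H.connectedComponentMk x))
      (fun v w p _ => walk_const _ hαc p)
  -- backward map
  have hβc : ∀ v w, H.Adj v w →
      (if D.Reachable v b then D.connectedComponentMk a else D.connectedComponentMk v)
      = (if D.Reachable w b then D.connectedComponentMk a else D.connectedComponentMk w) := by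
    intro v w hvw
    by_cases hv : D.Reachable v b <;> by_cases hw : D.Reachable w b
    · simp [hv, hw]
    · have hne : s(v, w) = s(a, b) := by
        by_contra hne
        have hd : D.Adj v w := (sdiff_adj _ _ _ _).mpr ⟨hvw, by simp [fromEdgeSet_adj, hne]⟩
        exact hw (hd.symm.reachable.trans hv)
      rcases Sym2.eq_iff.mp hne with ⟨rfl, rfl⟩ | ⟨rfl, rfl⟩
      · exact absurd (Reachable.refl _) hw
      · simp [hv, hw]
    · have hne : s(v, w) = s(a, b) := by
        by_contra hne
        have hd : D.Adj v w := (sdiff_adj _ _ _ _).mpr ⟨hvw, by simp [fromEdgeSet_adj, hne]⟩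
        exact hv (hd.reachable.trans hw)
      rcases Sym2.eq_iff.mp hne with ⟨rfl, rfl⟩ | ⟨rfl, rfl⟩
      · simp [hv, hw]
      · exact absurd (Reachable.refl _) hv
    · have hne : s(v, w) ≠ s(a, b) := by
        intro he
        rcases Sym2.eq_iff.mp he with ⟨rfl, rfl⟩ | ⟨rfl, rfl⟩
        · exact hw (Reachable.refl _)
        · exact hv (Reachable.refl _)
      have hd : D.Adj v w := (sdiff_adj _ _ _ _).mpr ⟨hvw, by simp [fromEdgeSet_adj, hne]⟩
      simp only [hv, hw, if_neg, if_false]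
      exact ConnectedComponent.sound hd.reachable
  let β : H.ConnectedComponent ⊕ Unit → D.ConnectedComponent :=
    Sum.elim
      (ConnectedComponent.lift
        (fun x => if D.Reachable x b then D.connectedComponentMk a else D.connectedComponentMk x)
        (fun v w p _ => walk_const _ hβc p))
      (fun _ => D.connectedComponentMk b)
  have hli : Function.LeftInverse β α := by
    refine ConnectedComponent.ind (fun x => ?_)
    by_cases hx : D.Reachable x b
    · simp only [α, β, ConnectedComponent.lift_mk, hx, if_pos, Sum.elim_inr]
      exact ConnectedComponent.sound hx.symm
    · simp [α, β, ConnectedComponent.lift_mk, hx]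
  have hri : Function.RightInverse β α := by
    rintro (C | u)
    · induction C using ConnectedComponent.ind with
      | _ x =>
        by_cases hx : D.Reachable x b
        · have h1 : ¬D.Reachable a b := hbr
          simp only [α, β, Sum.elim_inl, ConnectedComponent.lift_mk, hx, if_pos, h1, if_neg]
          exact congrArg Sum.inl
            (ConnectedComponent.sound (hab.reachable.trans ((hx.mono hDle).symm)))
        · simp [α, β, ConnectedComponent.lift_mk, hx]
    · have hb : D.Reachable b b := Reachable.refl _
      simp [α, β, hb]
  have e : D.ConnectedComponent ≃ H.ConnectedComponent ⊕ Unit :=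
    ⟨α, β, hli, hri⟩
  rw [Nat.card_congr e, Nat.card_sum]
  simp

/-- Existence of a rotation: if `F` is a spanning linear forest of `G`, `v` an endpoint of
`F`, and `u` a `G`-neighbour of `v` with `F`-degree at least 1, then there is an edge `uw`
of `F` such that removing `uw` and adding `uv` yields a linear forest with the same number
of components. -/
theorem stmt_3 {V : Type*} [Fintype V] (G F : SimpleGraph V) (hFG : F ≤ G)
    (hF : IsLinearForest F) (v u : V)
    (hv : (F.neighborSet v).ncard ≤ 1) (huv : G.Adj u v)
    (hu : 1 ≤ (F.neighborSet u).ncard) :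
    ∃ w, F.Adj u w ∧
      IsLinearForest (SimpleGraph.fromEdgeSet ((F.edgeSet \ {s(u, w)}) ∪ {s(u, v)})) ∧
      Nat.card (SimpleGraph.fromEdgeSet
          ((F.edgeSet \ {s(u, w)}) ∪ {s(u, v)})).ConnectedComponent
        = Nat.card F.ConnectedComponent := by
  classical
  have hne : u ≠ v := huv.ne
  by_cases hadj : F.Adj u v
  · -- trivial case: the edge uv is already in F; take w = v
    refine ⟨v, hadj, ?_⟩
    have hset : (F.edgeSet \ {s(u, v)}) ∪ {s(u, v)} = F.edgeSet := by
      rw [Set.diff_union_self]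
      exact Set.union_eq_self_of_subset_right (Set.singleton_subset_iff.mpr hadj)
    rw [hset, fromEdgeSet_edgeSet]
    exact ⟨hF, rfl⟩
  · -- main case
    obtain ⟨w, hw, hnr⟩ : ∃ w, F.Adj u w ∧ ¬(F \ fromEdgeSet {s(u, w)}).Reachable u v := by
      by_cases hr : F.Reachable u v
      · obtain ⟨p⟩ := hr
        obtain ⟨q, hq⟩ := p.toPath
        cases q with
        | nil => exact absurd rfl hne
        | @cons _ w _ ha rest =>
          refine ⟨w, ha, fun hreach => ?_⟩
          obtain ⟨r⟩ := hreach
          have hsubE : ∀ e ∈ r.edges, e ∈ F.edgeSet := fun e he =>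
            edgeSet_mono sdiff_le (r.edges_subset_edgeSet he)
          have hun := hF.1.path_unique (r.transfer F hsubE).toPath ⟨Walk.cons ha rest, hq⟩
          have hmm : s(u, w) ∈ ((r.transfer F hsubE).toPath : F.Walk u v).edges := by
            rw [show ((r.transfer F hsubE).toPath : F.Walk u v)
              = Walk.cons ha rest from congrArg Subtype.val hun]
            simp
          have h1 : s(u, w) ∈ (r.transfer F hsubE).edges :=
            Walk.edges_toPath_subset _ hmm
          rw [Walk.edges_transfer] at h1
          have h2 := r.edges_subset_edgeSet h1
          have h3 : (F \ fromEdgeSet {s(u, w)}).Adj u w := (mem_edgeSet _).mp h2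
          exact ((sdiff_adj _ _ _ _).mp h3).2 ((fromEdgeSet_adj _).mpr ⟨rfl, ha.ne⟩)
      · have hnz : (F.neighborSet u).ncard ≠ 0 := by omega
        obtain ⟨w, hw⟩ := Set.nonempty_of_ncard_ne_zero hnz
        exact ⟨w, hw, fun h => hr (h.mono sdiff_le)⟩
    set D := F \ fromEdgeSet {s(u, w)} with hDdef
    set F' := SimpleGraph.fromEdgeSet ((F.edgeSet \ {s(u, w)}) ∪ {s(u, v)}) with hF'def
    have hadj' : F'.Adj u v := (fromEdgeSet_adj _).mpr ⟨Or.inr rfl, hne⟩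
    have key : F' \ fromEdgeSet {s(u, v)} = D := by
      ext x y
      simp only [hF'def, hDdef, sdiff_adj, fromEdgeSet_adj, Set.mem_union, Set.mem_diff,
        Set.mem_singleton_iff]
      constructor
      · rintro ⟨⟨h1 | h1, hxy⟩, h2⟩
        · exact ⟨(mem_edgeSet _).mp h1.1, fun hc => h1.2 hc.1⟩
        · exact absurd ⟨h1, hxy⟩ h2
      · rintro ⟨hFxy, hnsuw⟩
        have hxy : x ≠ y := hFxy.ne
        refine ⟨⟨Or.inl ⟨(mem_edgeSet _).mpr hFxy, fun hc => hnsuw ⟨hc, hxy⟩⟩, hxy⟩, ?_⟩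
        rintro ⟨he, -⟩
        exact hadj ((mem_edgeSet _).mp (he ▸ (mem_edgeSet _).mpr hFxy))
    -- acyclicity
    have hacy : F'.IsAcyclic := by
      intro z c hc
      by_cases hel : s(u, v) ∈ c.edges
      · have hcyc : F'.Adj u v ∧ (F' \ fromEdgeSet {s(u, v)}).Reachable u v :=
          adj_and_reachable_delete_edges_iff_exists_cycle.mpr ⟨z, c, hc, hel⟩
        rw [key] at hcyc
        exact hnr hcyc.2
      · have hsub : ∀ e ∈ c.edges, e ∈ F.edgeSet := by
          intro e hee
          have h1 := c.edges_subset_edgeSet hee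
          rw [hF'def, edgeSet_fromEdgeSet] at h1
          rcases h1.1 with h | h
          · exact h.1
          · exact absurd (h ▸ hee) hel
        exact hF.1 (c.transfer F hsub) (hc.transfer hsub)
    -- degrees
    have hdeg : ∀ x, (F'.neighborSet x).ncard ≤ 2 := by
      intro x
      by_cases hxu : x = u
      · subst hxu
        have hsub : F'.neighborSet x ⊆ insert v (F.neighborSet x \ {w}) := by
          intro y hy
          rcases (fromEdgeSet_adj _).mp hy with ⟨h1 | h1, hxy⟩
          · exact Set.mem_insert_of_mem _
              ⟨(mem_neighborSet _ _ _).mpr ((mem_edgeSet _).mp h1.1), fun hyw => h1.2 (by rw [← hyw]; rfl)⟩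
          · rcases Sym2.eq_iff.mp h1 with ⟨-, rfl⟩ | ⟨rfl, rfl⟩
            · exact Set.mem_insert _ _
            · exact absurd rfl hxy
        calc (F'.neighborSet x).ncard
            ≤ (insert v (F.neighborSet x \ {w})).ncard :=
              Set.ncard_le_ncard hsub (Set.toFinite _)
          _ ≤ (F.neighborSet x \ {w}).ncard + 1 := Set.ncard_insert_le _ _
          _ ≤ 2 := by
              have h1 : (F.neighborSet x \ {w}).ncard + 1 = (F.neighborSet x).ncard :=
                Set.ncard_diff_singleton_add_one ((mem_neighborSet _ _ _).mpr hw) (Set.toFinite _)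
              have h2 := hF.2 x
              omega
      · by_cases hxv : x = v
        · subst hxv
          have hsub : F'.neighborSet x ⊆ insert u (F.neighborSet x) := by
            intro y hy
            rcases (fromEdgeSet_adj _).mp hy with ⟨h1 | h1, hxy⟩
            · exact Set.mem_insert_of_mem _ ((mem_neighborSet _ _ _).mpr ((mem_edgeSet _).mp h1.1))
            · rcases Sym2.eq_iff.mp h1 with ⟨rfl, rfl⟩ | ⟨-, rfl⟩
              · exact absurd rfl hxy
              · exact Set.mem_insert _ _
          calc (F'.neighborSet x).ncard
              ≤ (insert u (F.neighborSet x)).ncard := Set.ncard_le_ncard hsub (Set.toFinite _)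
            _ ≤ (F.neighborSet x).ncard + 1 := Set.ncard_insert_le _ _
            _ ≤ 2 := by have := hv; omega
        · have hsub : F'.neighborSet x ⊆ F.neighborSet x := by
            intro y hy
            rcases (fromEdgeSet_adj _).mp hy with ⟨h1 | h1, hxy⟩
            · exact (mem_neighborSet _ _ _).mpr ((mem_edgeSet _).mp h1.1)
            · rcases Sym2.eq_iff.mp h1 with ⟨rfl, -⟩ | ⟨rfl, -⟩
              · exact absurd rfl hxu
              · exact absurd rfl hxv
          exact le_trans (Set.ncard_le_ncard hsub (Set.toFinite _)) (hF.2 x)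
    -- component counts
    have hbr : ¬(F \ fromEdgeSet {s(u, w)}).Reachable u w :=
      isBridge_iff.mp (isAcyclic_iff_forall_adj_isBridge.mp hF.1 hw)
    have h1 : Nat.card D.ConnectedComponent = Nat.card F.ConnectedComponent + 1 :=
      card_cc_delete hw hbr
    have h2 : Nat.card D.ConnectedComponent = Nat.card F'.ConnectedComponent + 1 := by
      have := card_cc_delete hadj' (by rw [key]; exact hnr)
      rwa [key] at this
    refine ⟨w, hw, ?_, ?_⟩ <;> rw [← hF'def]
    · exact ⟨hacy, hdeg⟩
    · omega
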